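/- For every s > 2 there exists a constant C_s > 0 such that for all A ∈ ℝ³ and all r > 0, ∫_{S²} ⟨A + rσ⟩^{−s} dσ ≤ C_s ⟨|A| − r⟩^{2−s} ⟨r⟩^{−2}, where the integral is with respect to the surface measure on the unit sphere S² ⊂ ℝ³. -/

import Mathlib

open MeasureTheory

open Metric Set ENNReal NNReal

set_option maxHeartbeats 1000000

noncomputable section Stmt0Aux

local notation "E3" => EuclideanSpace ℝ (Fin 3)

private lemma sqrt_diff_le' {u v : ℝ} (hu : (1:ℝ)/4 ≤ u) (hv : (1:ℝ)/4 ≤ v) :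
    |Real.sqrt u - Real.sqrt v| ≤ |u - v| := by
  have hsu : Real.sqrt u ^ 2 = u := Real.sq_sqrt (by linarith)
  have hsv : Real.sqrt v ^ 2 = v := Real.sq_sqrt (by linarith)
  have h1 : (1:ℝ)/2 ≤ Real.sqrt u := by
    rw [show (1:ℝ)/2 = Real.sqrt (1/4) by
      rw [show (1:ℝ)/4 = (1/2)^2 by norm_num, Real.sqrt_sq (by norm_num)]]
    exact Real.sqrt_le_sqrt hu
  have h2 : (1:ℝ)/2 ≤ Real.sqrt v := by
    rw [show (1:ℝ)/2 = Real.sqrt (1/4) by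
      rw [show (1:ℝ)/4 = (1/2)^2 by norm_num, Real.sqrt_sq (by norm_num)]]
    exact Real.sqrt_le_sqrt hv
  rw [abs_le]
  constructor
  · nlinarith [le_abs_self (u - v), neg_abs_le (u - v)]
  · nlinarith [le_abs_self (u - v), neg_abs_le (u - v)]

private lemma cap_small (p : E3) (hp : ‖p‖ = 1) {ρ : ℝ} (hρ0 : 0 < ρ) (hρ1 : ρ ≤ 1) :
    μH[2] (sphere (0 : E3) 1 ∩ closedBall p ρ) ≤ ENNReal.ofReal (144 * ρ ^ 2) := by
  classical
  -- orthonormal basis whose last vector is `p`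
  have hv : Orthonormal ℝ (Set.restrict {(2 : Fin 3)} (fun _ : Fin 3 => p)) := by
    constructor
    · intro i; exact hp
    · intro i j hij
      exact absurd (Subtype.ext (i.2.out.trans j.2.out.symm)) hij
  obtain ⟨b, hb⟩ := hv.exists_orthonormalBasis_extension_of_card_eq
    (by simp [finrank_euclideanSpace_fin])
  have hb2 : b 2 = p := hb 2 rfl
  have hbnorm : ∀ i, ‖b i‖ = 1 := b.orthonormal.1
  -- norms via coordinates
  have hnorm : ∀ x : E3, ‖x‖ ^ 2 = (b.repr x 0) ^ 2 + (b.repr x 1) ^ 2 + (b.repr x 2) ^ 2 := by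
    intro x
    rw [← b.repr.norm_map x, EuclideanSpace.norm_eq, Real.sq_sqrt (by positivity)]
    simp [Fin.sum_univ_three, Real.norm_eq_abs, sq_abs]
  set g : (Fin 2 → ℝ) → ℝ := fun y => Real.sqrt (1 - ((y 0) ^ 2 + (y 1) ^ 2)) with hg
  set f : (Fin 2 → ℝ) → E3 := fun y => y 0 • b 0 + y 1 • b 1 + g y • b 2 with hf
  set T : Set (Fin 2 → ℝ) := {y | (y 0) ^ 2 + (y 1) ^ 2 ≤ 3/4} ∩ closedBall 0 ρ with hT
  -- Lipschitz bound
  have hLip : LipschitzOnWith 6 f T := by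
    rw [lipschitzOnWith_iff_dist_le_mul]
    intro x hx y hy
    have hx' := hx.1
    have hy' := hy.1
    simp only [Set.mem_setOf_eq] at hx' hy'
    have hd0 : |x 0 - y 0| ≤ dist x y := by
      rw [← Real.dist_eq]; exact dist_le_pi_dist x y 0
    have hd1 : |x 1 - y 1| ≤ dist x y := by
      rw [← Real.dist_eq]; exact dist_le_pi_dist x y 1
    have hxb0 : |x 0| ≤ 1 := by rw [abs_le]; constructor <;> nlinarith [sq_nonneg (x 1)]
    have hxb1 : |x 1| ≤ 1 := by rw [abs_le]; constructor <;> nlinarith [sq_nonneg (x 0)]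
    have hyb0 : |y 0| ≤ 1 := by rw [abs_le]; constructor <;> nlinarith [sq_nonneg (y 1)]
    have hyb1 : |y 1| ≤ 1 := by rw [abs_le]; constructor <;> nlinarith [sq_nonneg (y 0)]
    have hgd : |g x - g y| ≤ 4 * dist x y := by
      have h1 : (1:ℝ)/4 ≤ 1 - ((x 0) ^ 2 + (x 1) ^ 2) := by linarith
      have h2 : (1:ℝ)/4 ≤ 1 - ((y 0) ^ 2 + (y 1) ^ 2) := by linarith
      refine (sqrt_diff_le' h1 h2).trans ?_
      have heq : (1 - ((x 0) ^ 2 + (x 1) ^ 2)) - (1 - ((y 0) ^ 2 + (y 1) ^ 2))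
          = -(((x 0 - y 0) * (x 0 + y 0)) + ((x 1 - y 1) * (x 1 + y 1))) := by ring
      have k0 : |x 0 + y 0| ≤ 2 := (abs_add_le _ _).trans (by linarith)
      have k1 : |x 1 + y 1| ≤ 2 := (abs_add_le _ _).trans (by linarith)
      have m0 : |(x 0 - y 0) * (x 0 + y 0)| ≤ dist x y * 2 := by
        rw [abs_mul]; exact mul_le_mul hd0 k0 (abs_nonneg _) dist_nonneg
      have m1 : |(x 1 - y 1) * (x 1 + y 1)| ≤ dist x y * 2 := by
        rw [abs_mul]; exact mul_le_mul hd1 k1 (abs_nonneg _) dist_nonneg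
      rw [heq, abs_neg]
      calc |((x 0 - y 0) * (x 0 + y 0)) + ((x 1 - y 1) * (x 1 + y 1))|
          ≤ |(x 0 - y 0) * (x 0 + y 0)| + |(x 1 - y 1) * (x 1 + y 1)| := abs_add_le _ _
        _ ≤ 4 * dist x y := by linarith
    have hfd : dist (f x) (f y) ≤ 6 * dist x y := by
      rw [dist_eq_norm]
      have : f x - f y = (x 0 - y 0) • b 0 + (x 1 - y 1) • b 1 + (g x - g y) • b 2 := by
        simp only [hf, sub_smul]; abel
      rw [this]
      calc ‖(x 0 - y 0) • b 0 + (x 1 - y 1) • b 1 + (g x - g y) • b 2‖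
          ≤ ‖(x 0 - y 0) • b 0 + (x 1 - y 1) • b 1‖ + ‖(g x - g y) • b 2‖ := norm_add_le _ _
        _ ≤ ‖(x 0 - y 0) • b 0‖ + ‖(x 1 - y 1) • b 1‖ + ‖(g x - g y) • b 2‖ := by
            gcongr; exact norm_add_le _ _
        _ = |x 0 - y 0| + |x 1 - y 1| + |g x - g y| := by
            simp [norm_smul, hbnorm, Real.norm_eq_abs]
        _ ≤ dist x y + dist x y + 4 * dist x y := by gcongr
        _ = 6 * dist x y := by ring
    simpa using hfd
  -- the cap is contained in the image of `T`
  have hsub : sphere (0 : E3) 1 ∩ closedBall p ρ ⊆ f '' T := by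
    rintro σ ⟨hσS, hσB⟩
    have hσ1 : ‖σ‖ = 1 := by simpa using mem_sphere_zero_iff_norm.mp hσS
    set c0 := b.repr σ 0
    set c1 := b.repr σ 1
    set c2 := b.repr σ 2
    have hsum : c0 ^ 2 + c1 ^ 2 + c2 ^ 2 = 1 := by
      have := hnorm σ; rw [hσ1] at this; linarith [this]
    have hdist : c0 ^ 2 + c1 ^ 2 + (c2 - 1) ^ 2 ≤ ρ ^ 2 := by
      have h1 : ‖σ - p‖ ≤ ρ := by rwa [← dist_eq_norm]
      have h2 : ‖σ - p‖ ^ 2 ≤ ρ ^ 2 := by nlinarith [norm_nonneg (σ - p)]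
      have h3 := hnorm (σ - p)
      have h4 : b.repr (σ - p) = b.repr σ - b.repr p := by
        exact map_sub _ _ _
      have h5 : b.repr p = EuclideanSpace.single 2 (1:ℝ) := by
        rw [← hb2]; exact b.repr_self 2
      rw [h4, h5] at h3
      simp only [PiLp.sub_apply, EuclideanSpace.single_apply,
        if_neg (show (0:Fin 3) ≠ 2 by decide), if_neg (show (1:Fin 3) ≠ 2 by decide),
        if_pos rfl, sub_zero] at h3
      rw [h3] at h2
      exact h2
    have hc2 : 1 - ρ ^ 2 / 2 ≤ c2 := by nlinarith
    have hc2' : (1:ℝ)/2 ≤ c2 := by nlinarith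
    have hq : c0 ^ 2 + c1 ^ 2 ≤ 3/4 := by nlinarith
    refine ⟨![c0, c1], ⟨?_, ?_⟩, ?_⟩
    · simp only [Set.mem_setOf_eq, Matrix.cons_val_zero, Matrix.cons_val_one, Matrix.head_cons]
      exact hq
    · rw [mem_closedBall, dist_pi_le_iff hρ0.le]
      have habs0 : |c0| ≤ ρ := by
        rw [abs_le]
        constructor <;> nlinarith [hdist, sq_nonneg c1, sq_nonneg (c2 - 1)]
      have habs1 : |c1| ≤ ρ := by
        rw [abs_le]
        constructor <;> nlinarith [hdist, sq_nonneg c0, sq_nonneg (c2 - 1)]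
      intro i
      fin_cases i
      · simpa [Real.dist_eq, abs_sub_comm] using habs0
      · simpa [Real.dist_eq, abs_sub_comm] using habs1
    · have hgval : g ![c0, c1] = c2 := by
        simp only [hg, Matrix.cons_val_zero, Matrix.cons_val_one, Matrix.head_cons]
        rw [show 1 - (c0 ^ 2 + c1 ^ 2) = c2 ^ 2 by linarith]
        exact Real.sqrt_sq (by linarith)
      simp only [hf, hgval, Matrix.cons_val_zero, Matrix.cons_val_one, Matrix.head_cons]
      have := b.sum_repr σ
      rw [Fin.sum_univ_three] at this
      exact this
  -- measure computation
  have hμpi : (μH[2] : Measure (Fin 2 → ℝ)) = volume := by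
    rw [← MeasureTheory.hausdorffMeasure_pi_real (ι := Fin 2)]
    norm_num
  calc μH[2] (sphere (0 : E3) 1 ∩ closedBall p ρ)
      ≤ μH[2] (f '' T) := measure_mono hsub
    _ ≤ (6 : ℝ≥0∞) ^ (2:ℝ) * μH[2] T := by
        simpa using hLip.hausdorffMeasure_image_le (by norm_num : (0:ℝ) ≤ 2)
    _ ≤ (6 : ℝ≥0∞) ^ (2:ℝ) * μH[2] (Set.pi Set.univ fun _ : Fin 2 => Icc (-ρ) ρ) := by
        gcongr
        refine (inter_subset_right).trans ?_
        intro y hy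
        rw [mem_closedBall, dist_pi_le_iff hρ0.le] at hy
        intro i _
        have := hy i
        simp only [Pi.zero_apply, Real.dist_eq, sub_zero, abs_le] at this
        exact ⟨this.1, this.2⟩
    _ = (6 : ℝ≥0∞) ^ (2:ℝ) * (ENNReal.ofReal (2 * ρ)) ^ 2 := by
        rw [hμpi, volume_pi_pi]
        rw [Real.volume_Icc, show ρ - -ρ = 2 * ρ from by ring, Finset.prod_const,
          Finset.card_univ, Fintype.card_fin]
    _ = ENNReal.ofReal (144 * ρ ^ 2) := by
        have h6 : (6 : ℝ≥0∞) ^ (2:ℝ) = ENNReal.ofReal 36 := by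
          rw [show (2:ℝ) = ((2:ℕ):ℝ) from by norm_num, ENNReal.rpow_natCast]
          rw [show ENNReal.ofReal 36 = ((36 : ℝ≥0) : ℝ≥0∞) from by
            rw [ENNReal.ofReal]; norm_num]
          norm_num
        rw [h6, ← ENNReal.ofReal_pow (by linarith), ← ENNReal.ofReal_mul (by norm_num)]
        congr 1
        ring


private lemma mem_cap_of_inner {σ c : E3} (hσ : ‖σ‖ = 1) (hc : ‖c‖ = 1)
    (h : (1:ℝ)/2 ≤ inner ℝ c σ) : σ ∈ closedBall c 1 := by
  have hsq : ‖σ - c‖ ^ 2 = 2 - 2 * (inner ℝ σ c : ℝ) := by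
    rw [norm_sub_sq_real, hσ, hc]; ring
  rw [real_inner_comm] at hsq
  rw [mem_closedBall, dist_eq_norm]
  nlinarith [norm_nonneg (σ - c), hsq]

private lemma sphere_total : μH[2] (sphere (0 : E3) 1) ≤ ENNReal.ofReal 864 := by
  classical
  set S := sphere (0 : E3) 1
  set c : Fin 3 → Bool → E3 := fun i e => EuclideanSpace.single i (if e then (1:ℝ) else -1) with hc
  have hcn : ∀ i e, ‖c i e‖ = 1 := by
    intro i e
    rw [hc]
    rw [EuclideanSpace.norm_single]
    cases e <;> norm_num
  have hcover : S ⊆ ⋃ i, ⋃ e, (S ∩ closedBall (c i e) 1) := by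
    intro σ hσ
    have hσ1 : ‖σ‖ = 1 := by simpa using mem_sphere_zero_iff_norm.mp hσ
    have hsum : (σ 0) ^ 2 + (σ 1) ^ 2 + (σ 2) ^ 2 = 1 := by
      have := EuclideanSpace.norm_eq σ
      rw [hσ1] at this
      have h2 : (1:ℝ) = Real.sqrt (∑ i, ‖σ i‖ ^ 2) := this
      have h3 : (∑ i : Fin 3, ‖σ i‖ ^ 2) = 1 := by
        have hnn : (0:ℝ) ≤ ∑ i : Fin 3, ‖σ i‖ ^ 2 := by positivity
        nlinarith [Real.sq_sqrt hnn, h2]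
      rw [Fin.sum_univ_three] at h3
      simpa [Real.norm_eq_abs, sq_abs] using h3
    have hkey : ∃ i : Fin 3, (1:ℝ)/2 ≤ |σ i| := by
      by_contra hcon
      push_neg at hcon
      have h0 := hcon 0; have h1 := hcon 1; have h2 := hcon 2
      nlinarith [abs_nonneg (σ 0), abs_nonneg (σ 1), abs_nonneg (σ 2),
        sq_abs (σ 0), sq_abs (σ 1), sq_abs (σ 2)]
    obtain ⟨i, hi⟩ := hkey
    have hinner : ∀ e : Bool, (inner ℝ (c i e) σ : ℝ) = (if e then (1:ℝ) else -1) * σ i := by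
      intro e
      rw [hc]
      exact EuclideanSpace.inner_single_left i _ σ
    rcases le_or_gt 0 (σ i) with hpos | hneg
    · refine mem_iUnion.mpr ⟨i, mem_iUnion.mpr ⟨true, hσ, ?_⟩⟩
      refine mem_cap_of_inner hσ1 (hcn i true) ?_
      rw [hinner true, if_pos rfl, one_mul]
      rw [abs_of_nonneg hpos] at hi
      linarith
    · refine mem_iUnion.mpr ⟨i, mem_iUnion.mpr ⟨false, hσ, ?_⟩⟩
      refine mem_cap_of_inner hσ1 (hcn i false) ?_
      rw [hinner false, if_neg (by simp)]
      rw [abs_of_neg hneg] at hi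
      linarith
  calc μH[2] S ≤ μH[2] (⋃ i, ⋃ e, (S ∩ closedBall (c i e) 1)) := measure_mono hcover
    _ ≤ ∑ i : Fin 3, μH[2] (⋃ e, (S ∩ closedBall (c i e) 1)) := measure_iUnion_fintype_le _ _
    _ ≤ ∑ i : Fin 3, ∑ e : Bool, μH[2] (S ∩ closedBall (c i e) 1) := by
        gcongr with i
        exact measure_iUnion_fintype_le _ _
    _ ≤ ∑ _i : Fin 3, ∑ _e : Bool, ENNReal.ofReal 144 := by
        refine Finset.sum_le_sum fun i _ => Finset.sum_le_sum fun e _ => ?_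
        simpa using cap_small (c i e) (hcn i e) one_pos le_rfl
    _ ≤ ENNReal.ofReal 864 := by
        simp only [Finset.sum_const, Finset.card_univ, Fintype.card_fin, Fintype.card_bool]
        rw [show ENNReal.ofReal 864 = 6 * ENNReal.ofReal 144 from by
          rw [show (6:ℝ≥0∞) = ENNReal.ofReal 6 from by norm_num [ENNReal.ofReal],
            ← ENNReal.ofReal_mul (by norm_num)]
          norm_num]
        rw [show (3 : ℕ) • (2 • ENNReal.ofReal 144) = 6 * ENNReal.ofReal 144 from by
          rw [smul_smul]; norm_num [nsmul_eq_mul]]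

private lemma cap_all (p : E3) (hp : ‖p‖ = 1) {ρ : ℝ} (hρ0 : 0 < ρ) :
    μH[2] (sphere (0 : E3) 1 ∩ closedBall p ρ) ≤ ENNReal.ofReal (864 * ρ ^ 2) := by
  rcases le_or_gt ρ 1 with h1 | h1
  · refine (cap_small p hp hρ0 h1).trans (ENNReal.ofReal_le_ofReal ?_)
    nlinarith [sq_nonneg ρ]
  · refine (measure_mono inter_subset_left).trans (sphere_total.trans ?_)
    refine ENNReal.ofReal_le_ofReal ?_
    nlinarith


open intervalIntegral in
/-- For every `s > 2` there exists `C_s > 0` such that for all `A ∈ ℝ³` and `r > 0`,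
`∫_{S²} ⟨A + rσ⟩^{-s} dσ ≤ C_s ⟨|A| - r⟩^{2-s} ⟨r⟩^{-2}`, where the integral is with respect to
the surface measure (2-dimensional Hausdorff measure) on the unit sphere `S² ⊂ ℝ³`, and
`⟨x⟩ = (1 + |x|²)^{1/2}`. -/
theorem stmt_0 (s : ℝ) (hs : 2 < s) :
    ∃ C : ℝ, 0 < C ∧
      ∀ (A : EuclideanSpace ℝ (Fin 3)) (r : ℝ), 0 < r →
        (∫⁻ σ in Metric.sphere (0 : EuclideanSpace ℝ (Fin 3)) 1,
            ENNReal.ofReal ((1 + ‖A + r • σ‖ ^ 2) ^ (-s / 2)) ∂μH[2])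
          ≤ ENNReal.ofReal
              (C * (1 + (‖A‖ - r) ^ 2) ^ ((2 - s) / 2) * (1 + r ^ 2)⁻¹) := by
  have hs0 : (0:ℝ) < s := by linarith
  have hs2 : (0:ℝ) < s - 2 := by linarith
  have hsdiv : (0:ℝ) < s / (s - 2) := by positivity
  refine ⟨3456 * (1 + s / (s - 2)), by positivity, ?_⟩
  intro A r hr
  set a := ‖A‖ with ha
  set X := 1 + (a - r) ^ 2 with hX
  set R := 1 + r ^ 2 with hR
  have hX1 : (1:ℝ) ≤ X := by nlinarith [sq_nonneg (a - r)]
  have hX0 : (0:ℝ) < X := by linarith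
  have hR0 : (0:ℝ) < R := by positivity
  set lam := X ^ (-s / 2) with hlam
  have hlam0 : 0 < lam := Real.rpow_pos_of_pos hX0 _
  have hXsplit : X ^ ((2 - s) / 2) = X * lam := by
    rw [hlam, show (2 - s)/2 = 1 + (-s/2) from by ring, Real.rpow_add hX0, Real.rpow_one]
  have hY0 : (0:ℝ) ≤ X ^ ((2 - s) / 2) := Real.rpow_nonneg hX0.le _
  -- pointwise bound
  have hpt : ∀ σ : E3, σ ∈ sphere (0:E3) 1 → (1 + ‖A + r • σ‖ ^ 2) ^ (-s / 2) ≤ lam := by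
    intro σ hσ
    have hσ1 : ‖σ‖ = 1 := mem_sphere_zero_iff_norm.mp hσ
    have h1 : |a - r| ≤ ‖A + r • σ‖ := by
      have h2 := abs_norm_sub_norm_le A (-(r • σ))
      rw [sub_neg_eq_add, norm_neg, norm_smul, hσ1, Real.norm_eq_abs, abs_of_pos hr,
        mul_one] at h2
      exact h2
    have h2 : X ≤ 1 + ‖A + r • σ‖ ^ 2 := by
      have := sq_abs (a - r)
      nlinarith [norm_nonneg (A + r • σ), abs_nonneg (a - r)]
    exact Real.rpow_le_rpow_of_nonpos hX0 h2 (by nlinarith)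
  set g : E3 → ℝ := fun σ => (1 + ‖A + r • σ‖ ^ 2) ^ (-s / 2) with hg
  have hgc : Continuous g := by
    have hbase : Continuous fun σ : E3 => 1 + ‖A + r • σ‖ ^ 2 := by fun_prop
    exact hbase.rpow_const fun x => Or.inl (by positivity)
  by_cases hcase : R ≤ 4 * X
  · -- easy case
    calc (∫⁻ σ in sphere (0 : E3) 1, ENNReal.ofReal ((1 + ‖A + r • σ‖ ^ 2) ^ (-s / 2)) ∂μH[2])
        ≤ ∫⁻ _σ in sphere (0 : E3) 1, ENNReal.ofReal lam ∂μH[2] := by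
          refine setLIntegral_mono measurable_const fun σ hσ => ENNReal.ofReal_le_ofReal (hpt σ hσ)
      _ = ENNReal.ofReal lam * μH[2] (sphere (0 : E3) 1) := setLIntegral_const _ _
      _ ≤ ENNReal.ofReal lam * ENNReal.ofReal 864 := by gcongr; exact sphere_total
      _ = ENNReal.ofReal (lam * 864) := (ENNReal.ofReal_mul hlam0.le).symm
      _ ≤ ENNReal.ofReal (3456 * (1 + s / (s - 2)) * X ^ ((2 - s) / 2) * R⁻¹) := by
          refine ENNReal.ofReal_le_ofReal ?_
          rw [hXsplit]
          rw [show 3456 * (1 + s / (s - 2)) * (X * lam) * R⁻¹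
              = (3456 * (1 + s / (s - 2)) * X * lam) / R from by ring]
          rw [le_div_iff₀ hR0]
          have key : 864 * R ≤ 3456 * (1 + s / (s - 2)) * X := by nlinarith
          nlinarith [mul_nonneg (sub_nonneg.mpr key) hlam0.le]
  · -- main case
    push_neg at hcase
    have hr2 : 3 < r ^ 2 := by nlinarith
    have hr1 : 1 < r := by nlinarith
    have har : r / 2 < a := by
      by_contra hcon
      push_neg at hcon
      nlinarith [sq_nonneg (a - r + r/2)]
    have ha0 : 0 < a := lt_trans (by positivity) har
    have har4 : R ≤ 4 * (a * r) := by nlinarith [mul_lt_mul_of_pos_right har hr]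
    have hUmeas : ∀ t : ℝ, MeasurableSet {σ : E3 | t < g σ} := fun t =>
      measurableSet_lt measurable_const hgc.measurable
    have hgnn : 0 ≤ᵐ[μH[2].restrict (sphere (0:E3) 1)] g :=
      ae_of_all _ fun σ => Real.rpow_nonneg (by positivity) _
    have hzero : ∀ t : ℝ, lam < t → (μH[2].restrict (sphere (0:E3) 1)) {σ : E3 | t < g σ} = 0 := by
      intro t ht
      rw [Measure.restrict_apply (hUmeas t)]
      have hempty : {σ : E3 | t < g σ} ∩ sphere (0:E3) 1 = ∅ := by
        ext σ
        simp only [mem_inter_iff, mem_setOf_eq, mem_empty_iff_false, iff_false, not_and]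
        intro h1 h2
        exact absurd (lt_of_le_of_lt ((hpt σ h2).trans ht.le) h1) (lt_irrefl _)
      rw [hempty, measure_empty]
    have hcap : ∀ t ∈ Ioc (0:ℝ) lam,
        (μH[2].restrict (sphere (0:E3) 1)) {σ : E3 | t < g σ}
          ≤ ENNReal.ofReal (3456 / R * t ^ (-2/s)) := by
      rintro t ⟨ht0, _⟩
      set p : E3 := (-a⁻¹) • A with hp
      have hpnorm : ‖p‖ = 1 := by
        rw [hp, norm_smul, Real.norm_eq_abs, abs_neg, abs_of_pos (by positivity : (0:ℝ) < a⁻¹), ← ha]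
        field_simp
      have hT0 : 0 < t ^ (-2/s) := Real.rpow_pos_of_pos ht0 _
      set ρt := Real.sqrt (t ^ (-2/s) / (a * r)) with hρt
      have hρt0 : 0 < ρt := Real.sqrt_pos.mpr (by positivity)
      have hρtsq : ρt ^ 2 = t ^ (-2/s) / (a * r) := Real.sq_sqrt (by positivity)
      have hsub : {σ : E3 | t < g σ} ∩ sphere (0:E3) 1 ⊆ sphere (0:E3) 1 ∩ closedBall p ρt := by
        rintro σ ⟨hσU, hσS⟩
        refine ⟨hσS, ?_⟩
        have hσ1 : ‖σ‖ = 1 := mem_sphere_zero_iff_norm.mp hσS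
        set w := ‖A + r • σ‖ ^ 2 with hw
        have hw0 : (0:ℝ) ≤ w := by positivity
        have h1w : 1 + w < t ^ (-2/s) := by
          have hgt : t < (1 + w) ^ (-s/2) := hσU
          have hb0 : (0:ℝ) < 1 + w := by linarith
          have hneg : -2/s < 0 := div_neg_of_neg_of_pos (by norm_num) hs0
          have step := Real.rpow_lt_rpow_of_neg ht0 hgt hneg
          rwa [← Real.rpow_mul hb0.le, show (-s/2) * (-2/s) = 1 from by field_simp,
            Real.rpow_one] at step
        have hinner : w = a^2 + 2 * r * (inner ℝ A σ : ℝ) + r^2 := by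
          rw [hw, norm_add_sq_real, real_inner_smul_right, norm_smul, Real.norm_eq_abs,
            abs_of_pos hr, hσ1, mul_one, ← ha]
          ring
        have hexp : ‖σ - p‖^2 = 2 + 2 * a⁻¹ * (inner ℝ A σ : ℝ) := by
          rw [norm_sub_sq_real, hσ1, hpnorm, hp, real_inner_smul_right, real_inner_comm]
          ring
        have hdist2 : ‖σ - p‖^2 * (a * r) = w - (a - r)^2 := by
          rw [hexp, hinner]
          field_simp
          ring
        have hfin : ‖σ - p‖^2 ≤ ρt^2 := by
          rw [hρtsq, le_div_iff₀ (by positivity)]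
          nlinarith [sq_nonneg (a - r)]
        rw [mem_closedBall, dist_eq_norm, ← Real.sqrt_sq (norm_nonneg (σ - p)),
          ← Real.sqrt_sq hρt0.le]
        exact Real.sqrt_le_sqrt hfin
      calc (μH[2].restrict (sphere (0:E3) 1)) {σ : E3 | t < g σ}
          = μH[2] ({σ : E3 | t < g σ} ∩ sphere (0:E3) 1) := Measure.restrict_apply (hUmeas t)
        _ ≤ μH[2] (sphere (0:E3) 1 ∩ closedBall p ρt) := measure_mono hsub
        _ ≤ ENNReal.ofReal (864 * ρt ^ 2) := cap_all p hpnorm hρt0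
        _ ≤ ENNReal.ofReal (3456 / R * t ^ (-2/s)) := by
            refine ENNReal.ofReal_le_ofReal ?_
            rw [hρtsq, ← mul_div_assoc,
              show (3456:ℝ) / R * t ^ (-2/s) = 3456 * t ^ (-2/s) / R from by ring,
              div_le_div_iff₀ (by positivity) hR0]
            nlinarith [mul_le_mul_of_nonneg_left har4 (le_of_lt hT0)]
    rw [lintegral_eq_lintegral_meas_lt _ hgnn hgc.aemeasurable]
    have hsplit : Ioi (0:ℝ) = Ioc 0 lam ∪ Ioi lam := (Ioc_union_Ioi_eq_Ioi hlam0.le).symm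
    rw [hsplit, lintegral_union measurableSet_Ioi (Ioc_disjoint_Ioi le_rfl)]
    have h2nd : (∫⁻ t in Ioi lam, (μH[2].restrict (sphere (0:E3) 1)) {σ : E3 | t < g σ}) = 0 := by
      have hae : (fun t => (μH[2].restrict (sphere (0:E3) 1)) {σ : E3 | t < g σ})
          =ᵐ[volume.restrict (Ioi lam)] (fun _ => (0:ℝ≥0∞)) :=
        (ae_restrict_iff' measurableSet_Ioi).2 (ae_of_all _ fun t ht => hzero t ht)
      rw [lintegral_congr_ae hae, lintegral_zero]
    rw [h2nd, add_zero]
    have hneg1 : (-1:ℝ) < -2/s := by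
      rw [neg_div, neg_lt_neg_iff, div_lt_one hs0]
      linarith
    have hInt : IntegrableOn (fun t : ℝ => 3456 / R * t ^ (-2/s)) (Ioc 0 lam) := by
      have h1 : IntervalIntegrable (fun t : ℝ => t ^ (-2/s)) volume 0 lam :=
        intervalIntegrable_rpow' hneg1
      have h2 := h1.const_mul (3456 / R)
      rwa [intervalIntegrable_iff, uIoc_of_le hlam0.le] at h2
    have hnn2 : 0 ≤ᵐ[volume.restrict (Ioc 0 lam)] fun t : ℝ => 3456 / R * t ^ (-2/s) :=
      (ae_restrict_iff' measurableSet_Ioc).2 (ae_of_all _ fun t ht =>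
        mul_nonneg (by positivity) (Real.rpow_nonneg ht.1.le _))
    calc (∫⁻ t in Ioc 0 lam, (μH[2].restrict (sphere (0:E3) 1)) {σ : E3 | t < g σ})
        ≤ ∫⁻ t in Ioc 0 lam, ENNReal.ofReal (3456 / R * t ^ (-2/s)) :=
          lintegral_mono_ae ((ae_restrict_iff' measurableSet_Ioc).2
            (ae_of_all _ fun t ht => hcap t ht))
      _ = ENNReal.ofReal (∫ t in Ioc 0 lam, 3456 / R * t ^ (-2/s)) :=
          (ofReal_integral_eq_lintegral_ofReal hInt hnn2).symm
      _ ≤ ENNReal.ofReal (3456 * (1 + s / (s - 2)) * X ^ ((2 - s) / 2) * R⁻¹) := by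
          refine ENNReal.ofReal_le_ofReal ?_
          rw [MeasureTheory.integral_const_mul, ← integral_of_le hlam0.le,
            integral_rpow (Or.inl hneg1),
            Real.zero_rpow (ne_of_gt (by linarith : (0:ℝ) < -2/s + 1))]
          have hlampow : lam ^ (-2/s + 1) = X ^ ((2-s)/2) := by
            rw [hlam, ← Real.rpow_mul hX0.le,
              show (-s/2) * (-2/s + 1) = (2-s)/2 from by have hsne : s ≠ 0 := ne_of_gt hs0; field_simp; ring]
          rw [hlampow, sub_zero]
          have hk : -2/s + 1 = (s-2)/s := by have hsne : s ≠ 0 := ne_of_gt hs0; field_simp; ring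
          rw [hk]
          rw [show 3456 / R * (X ^ ((2-s)/2) / ((s-2)/s))
              = (3456 * (s/(s-2))) * X ^ ((2-s)/2) * R⁻¹ from by
            field_simp]
          gcongr
          linarith

end Stmt0Aux
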